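/- Let $G$ be a graph on $n$ vertices and let $c_k$ denote the number of connected sets of $G$ of cardinality $k$. Then for all $k \in \{2,\dots,n\}$ and $t \in \{1,\dots,k-1\}$, we have $(k-t+1)c_k \leq \binom{n-t}{k-t} c_t$. -/

import Mathlib

open Finset
open scoped Classical

/-- The node reliability polynomial of a graph `G`: the probability that the set of
operational nodes is nonempty and induces a connected subgraph, when each node
operates independently with probability `p`. -/
noncomputable def nRel {V : Type*} [Fintype V] (G : SimpleGraph V) (p : ℝ) : ℝ :=
  ∑ s : Finset V, if (G.induce (s : Set V)).Connected
    then p ^ s.card * (1 - p) ^ (Fintype.card V - s.card) else 0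

/-- `cCount G k` is the number of `k`-element vertex subsets of `G` inducing a
connected subgraph (note: `SimpleGraph.Connected` requires nonemptiness). -/
noncomputable def cCount {V : Type*} [Fintype V] (G : SimpleGraph V) (k : ℕ) : ℕ :=
  ((Finset.univ : Finset (Finset V)).filter
    (fun s : Finset V => s.card = k ∧ (G.induce (s : Set V)).Connected)).card

section Aux
variable {V : Type*} {G : SimpleGraph V}


lemma conn_iff_walks (s : Set V) :
    (G.induce s).Connected ↔ s.Nonempty ∧
      ∀ u ∈ s, ∀ v ∈ s, ∃ p : G.Walk u v, ∀ x ∈ p.support, x ∈ s := by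
  rw [SimpleGraph.connected_induce_iff,
    SimpleGraph.Subgraph.connected_iff_forall_exists_walk_subgraph]
  simp only [SimpleGraph.Subgraph.induce_verts]
  constructor
  · rintro ⟨hne, h⟩
    refine ⟨hne, fun u hu v hv => ?_⟩
    obtain ⟨p, hp⟩ := h hu hv
    refine ⟨p, fun x hx => ?_⟩
    have := hp.1
    rw [SimpleGraph.Walk.verts_toSubgraph] at this
    exact this hx
  · rintro ⟨hne, h⟩
    refine ⟨hne, fun {u v} hu hv => ?_⟩
    obtain ⟨p, hp⟩ := h u hu v hv
    refine ⟨p, le_trans p.toSubgraph_le_induce_support ?_⟩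
    exact SimpleGraph.Subgraph.induce_mono_right (by exact fun x hx => hp x hx)

lemma singleton_conn (b : V) : (G.induce ({b} : Set V)).Connected := by
  rw [conn_iff_walks]
  refine ⟨⟨b, rfl⟩, ?_⟩
  rintro x rfl y rfl
  exact ⟨SimpleGraph.Walk.nil, by simp⟩

lemma exists_conn_erase [DecidableEq V] (s : Finset V)
    (hc : (G.induce (↑s : Set V)).Connected) (h2 : 2 ≤ s.card) :
    ∃ u ∈ s, (G.induce (↑(s.erase u) : Set V)).Connected := by
  rw [conn_iff_walks] at hc
  obtain ⟨hne, hw⟩ := hc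
  obtain ⟨r, hr⟩ := hne
  have hr' : r ∈ s := hr
  -- the set of lengths of walks from r to v within s
  set L : V → Set ℕ := fun v => {n | ∃ p : G.Walk r v, p.length = n ∧ ∀ x ∈ p.support, x ∈ (↑s : Set V)} with hL
  have hLne : ∀ v ∈ s, (L v).Nonempty := by
    intro v hv
    obtain ⟨p, hp⟩ := hw r hr v hv
    exact ⟨p.length, p, rfl, hp⟩
  set d : V → ℕ := fun v => sInf (L v) with hd
  obtain ⟨u, hu, hmax⟩ := s.exists_max_image d ⟨r, hr'⟩
  have hdr : d r = 0 := by
    have h0 : (0 : ℕ) ∈ L r := ⟨SimpleGraph.Walk.nil, rfl, by simpa using hr⟩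
    exact Nat.le_zero.mp (Nat.sInf_le h0)
  have hur : u ≠ r := by
    rintro rfl
    obtain ⟨v, hv, hvr⟩ := Finset.exists_mem_ne h2 u
    have hdv : d v = 0 := Nat.le_zero.mp (hdr ▸ hmax v hv)
    obtain ⟨p, hlen, -⟩ := Nat.sInf_mem (hLne v hv)
    have hl0 : p.length = 0 := by rw [hlen]; exact hdv
    exact hvr (SimpleGraph.Walk.eq_of_length_eq_zero hl0).symm
  have hav : ∀ v ∈ s, v ≠ u →
      ∃ p : G.Walk r v, (∀ x ∈ p.support, x ∈ (↑s : Set V)) ∧ u ∉ p.support := by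
    intro v hv hvu
    obtain ⟨p, hlen, hsupp⟩ := Nat.sInf_mem (hLne v hv)
    refine ⟨p, hsupp, fun hmem => ?_⟩
    have h1 : d u ≤ (p.takeUntil u hmem).length := by
      refine Nat.sInf_le ⟨p.takeUntil u hmem, rfl, fun x hx => ?_⟩
      exact hsupp x (SimpleGraph.Walk.support_takeUntil_subset p hmem hx)
    have h2' : 1 ≤ (p.dropUntil u hmem).length := by
      rcases Nat.eq_zero_or_pos (p.dropUntil u hmem).length with h0 | h0
      · exact absurd (SimpleGraph.Walk.eq_of_length_eq_zero h0).symm hvu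
      · exact h0
    have h3 : (p.takeUntil u hmem).length + (p.dropUntil u hmem).length = p.length := by
      have h := congrArg SimpleGraph.Walk.length (SimpleGraph.Walk.take_spec p hmem)
      rw [SimpleGraph.Walk.length_append] at h
      exact h
    have h4 : d v ≤ d u := hmax v hv
    have h5 : p.length = d v := hlen
    omega
  refine ⟨u, hu, ?_⟩
  rw [conn_iff_walks]
  constructor
  · exact ⟨r, by simp [Finset.mem_erase, hur.symm, hr']⟩
  · intro x hx y hy
    rw [Finset.mem_coe, Finset.mem_erase] at hx hy
    obtain ⟨px, hpxs, hpxu⟩ := hav x hx.2 hx.1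
    obtain ⟨py, hpys, hpyu⟩ := hav y hy.2 hy.1
    refine ⟨px.reverse.append py, fun z hz => ?_⟩
    rw [SimpleGraph.Walk.mem_support_append_iff] at hz
    have hzs : z ∈ s ∧ z ≠ u := by
      rcases hz with hz | hz
      · rw [SimpleGraph.Walk.support_reverse, List.mem_reverse] at hz
        exact ⟨hpxs z hz, fun h => hpxu (h ▸ hz)⟩
      · exact ⟨hpys z hz, fun h => hpyu (h ▸ hz)⟩
    exact Finset.mem_coe.mpr (Finset.mem_erase.mpr ⟨hzs.2, hzs.1⟩)

lemma exists_boundary_adj {T : Set V} :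
    ∀ {x y : V} (p : G.Walk x y), x ∈ T → y ∉ T →
      ∃ a b, G.Adj a b ∧ a ∈ T ∧ b ∉ T ∧ b ∈ p.support := by
  intro x y p
  induction p with
  | nil => intro hx hy; exact absurd hx hy
  | @cons x w y h q ih =>
    intro hx hy
    by_cases hw : w ∈ T
    · obtain ⟨a, b, hab, ha, hb, hbs⟩ := ih hw hy
      exact ⟨a, b, hab, ha, hb, by simp [hbs]⟩
    · exact ⟨x, w, h, hx, hw, by simp⟩

lemma conn_grow [DecidableEq V] {S T : Finset V}
    (hS : (G.induce (↑S : Set V)).Connected) (hT : (G.induce (↑T : Set V)).Connected)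
    (hTS : T ⊆ S) (hne : T ≠ S) :
    ∃ b ∈ S, b ∉ T ∧ (G.induce (↑(insert b T) : Set V)).Connected := by
  obtain ⟨y, hyS, hyT⟩ := Finset.exists_of_ssubset (lt_of_le_of_ne hTS hne)
  obtain ⟨x, hxT⟩ := (conn_iff_walks (G := G) _).mp hT |>.1
  have hxT' : x ∈ T := hxT
  obtain ⟨p, hp⟩ := ((conn_iff_walks (G := G) _).mp hS).2 x (hTS hxT') y hyS
  obtain ⟨a, b, hab, haT, hbT, hbs⟩ :=
    exists_boundary_adj (T := (↑T : Set V)) p hxT (by simpa using hyT)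
  have hbS : b ∈ S := hp b hbs
  refine ⟨b, hbS, by simpa using hbT, ?_⟩
  have := SimpleGraph.connected_induce_union (G := G) hT.preconnected (singleton_conn b).preconnected
    haT rfl (by exact hab)
  have hset : (↑(insert b T) : Set V) = (↑T : Set V) ∪ {b} := by
    ext z; simp [or_comm]
  rwa [hset]

lemma conn_grow_card [DecidableEq V] {S : Finset V}
    (hS : (G.induce (↑S : Set V)).Connected) {u : V} (hu : u ∈ S) :
    ∀ m, 1 ≤ m → m ≤ S.card →
      ∃ T ⊆ S, u ∈ T ∧ T.card = m ∧ (G.induce (↑T : Set V)).Connected := by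
  intro m
  induction m with
  | zero => omega
  | succ m ih =>
    intro _ hm1
    by_cases hm : m = 0
    · subst hm
      exact ⟨{u}, by simpa using hu, by simp, by simp, by rw [Finset.coe_singleton]; exact singleton_conn u⟩
    · obtain ⟨T, hTS, huT, hcard, hconn⟩ := ih (by omega) (by omega)
      have hne : T ≠ S := by
        intro h; rw [h] at hcard; omega
      obtain ⟨b, hbS, hbT, hconn'⟩ := conn_grow hS hconn hTS hne
      exact ⟨insert b T, Finset.insert_subset hbS hTS, Finset.mem_insert_of_mem huT,
        by rw [Finset.card_insert_of_notMem hbT, hcard], hconn'⟩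

lemma conn_subsets_count [DecidableEq V] :
    ∀ (N : ℕ) (s : Finset V), s.card ≤ N → (G.induce (↑s : Set V)).Connected →
    ∀ t, 1 ≤ t → t ≤ s.card →
      s.card - t + 1 ≤
        ((s.powersetCard t).filter (fun (T : Finset V) => (G.induce (↑T : Set V)).Connected)).card := by
  intro N
  induction N with
  | zero =>
    intro s hsN hconn t ht1 hts
    omega
  | succ N ih =>
    intro s hsN hconn t ht1 hts
    rcases eq_or_lt_of_le hts with heq | hlt
    · -- s.card = t : s itself is a connected subset
      have hmem : s ∈ (s.powersetCard t).filter
          (fun (T : Finset V) => (G.induce (↑T : Set V)).Connected) := by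
        rw [Finset.mem_filter, Finset.mem_powersetCard]
        exact ⟨⟨Finset.Subset.refl s, heq.symm⟩, hconn⟩
      have := Finset.card_pos.mpr ⟨s, hmem⟩
      omega
    · -- t < s.card : remove a non-cut vertex
      have h2 : 2 ≤ s.card := by omega
      obtain ⟨u, hu, hconn'⟩ := exists_conn_erase s hconn h2
      have hcard' : (s.erase u).card = s.card - 1 := Finset.card_erase_of_mem hu
      have hih := ih (s.erase u) (by omega) hconn' t ht1 (by omega)
      -- the filter over erase is a strict subset of the filter over s
      obtain ⟨T0, hT0S, huT0, hT0card, hT0conn⟩ :=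
        conn_grow_card hconn hu t ht1 (le_of_lt hlt)
      have hsub : ((s.erase u).powersetCard t).filter
            (fun (T : Finset V) => (G.induce (↑T : Set V)).Connected) ⊆
          ((s.powersetCard t).filter (fun (T : Finset V) => (G.induce (↑T : Set V)).Connected)) := by
        intro T hT
        rw [Finset.mem_filter, Finset.mem_powersetCard] at hT ⊢
        exact ⟨⟨hT.1.1.trans (Finset.erase_subset u s), hT.1.2⟩, hT.2⟩
      have hT0mem : T0 ∈ (s.powersetCard t).filter
          (fun (T : Finset V) => (G.induce (↑T : Set V)).Connected) := by
        rw [Finset.mem_filter, Finset.mem_powersetCard]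
        exact ⟨⟨hT0S, hT0card⟩, hT0conn⟩
      have hT0notmem : T0 ∉ ((s.erase u).powersetCard t).filter
          (fun (T : Finset V) => (G.induce (↑T : Set V)).Connected) := by
        rw [Finset.mem_filter, Finset.mem_powersetCard]
        rintro ⟨⟨hsub', -⟩, -⟩
        exact (Finset.mem_erase.mp (hsub' huT0)).1 rfl
      have hlt' := Finset.card_lt_card (Finset.ssubset_iff_of_subset hsub |>.mpr
        ⟨T0, hT0mem, hT0notmem⟩)
      omega

lemma card_supersets [Fintype V] [DecidableEq V] (T : Finset V) {t k : ℕ}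
    (hT : T.card = t) (htk : t ≤ k) :
    ((Finset.univ : Finset (Finset V)).filter
        (fun S : Finset V => S.card = k ∧ T ⊆ S)).card
      = (Fintype.card V - t).choose (k - t) := by
  have hbij : ((Finset.univ : Finset (Finset V)).filter
        (fun S : Finset V => S.card = k ∧ T ⊆ S)).card
      = ((Finset.univ \ T).powersetCard (k - t)).card := by
    refine Finset.card_bij (fun S _ => S \ T) ?_ ?_ ?_
    · intro S hS
      rw [Finset.mem_filter] at hS
      rw [Finset.mem_powersetCard]
      refine ⟨Finset.sdiff_subset_sdiff (Finset.subset_univ S) (Finset.Subset.refl T), ?_⟩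
      rw [Finset.card_sdiff_of_subset hS.2.2, hS.2.1, hT]
    · intro S1 h1 S2 h2 heq
      rw [Finset.mem_filter] at h1 h2
      have heq' : S1 \ T = S2 \ T := heq
      rw [← Finset.sdiff_union_of_subset h1.2.2, ← Finset.sdiff_union_of_subset h2.2.2, heq']
    · intro A hA
      rw [Finset.mem_powersetCard] at hA
      have hdisj : Disjoint A T := by
        refine Finset.disjoint_left.mpr fun a haA haT => ?_
        exact (Finset.mem_sdiff.mp (hA.1 haA)).2 haT
      refine ⟨A ∪ T, ?_, ?_⟩
      · rw [Finset.mem_filter]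
        refine ⟨Finset.mem_univ _, ?_, Finset.subset_union_right⟩
        rw [Finset.card_union_of_disjoint hdisj, hA.2, hT]
        omega
      · show (A ∪ T) \ T = A
        rw [Finset.union_sdiff_right, Finset.sdiff_eq_self_of_disjoint hdisj]
  rw [hbij, Finset.card_powersetCard, Finset.card_sdiff_of_subset (Finset.subset_univ T),
    Finset.card_univ, hT]

end Aux

theorem stmt1 {V : Type*} [Fintype V] (G : SimpleGraph V)
    (n : ℕ) (hn : n = Fintype.card V)
    (k t : ℕ) (hk2 : 2 ≤ k) (hkn : k ≤ n) (ht1 : 1 ≤ t) (htk : t ≤ k - 1) :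
    (k - t + 1) * cCount G k ≤ (n - t).choose (k - t) * cCount G t := by
  unfold cCount
  classical
  have htk' : t ≤ k := by omega
  set Ck := (Finset.univ : Finset (Finset V)).filter
    (fun s : Finset V => s.card = k ∧ (G.induce (s : Set V)).Connected) with hCk
  set Ct := (Finset.univ : Finset (Finset V)).filter
    (fun s : Finset V => s.card = t ∧ (G.induce (s : Set V)).Connected) with hCt
  have step1 : (k - t + 1) * Ck.card ≤
      ∑ S ∈ Ck, ((S.powersetCard t).filter
        (fun (T : Finset V) => (G.induce (↑T : Set V)).Connected)).card := by
    calc (k - t + 1) * Ck.card = ∑ _S ∈ Ck, (k - t + 1) := by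
          rw [Finset.sum_const, smul_eq_mul, mul_comm]
      _ ≤ _ := by
          refine Finset.sum_le_sum fun S hS => ?_
          rw [hCk, Finset.mem_filter] at hS
          have := conn_subsets_count (G := G) k S (le_of_eq hS.2.1) hS.2.2 t ht1
            (by omega)
          rwa [hS.2.1] at this
  have step2 : ∀ S : Finset V, (S.powersetCard t).filter
        (fun (T : Finset V) => (G.induce (↑T : Set V)).Connected)
      = Ct.filter (fun T => T ⊆ S) := by
    intro S
    ext T
    rw [Finset.mem_filter, Finset.mem_powersetCard, Finset.mem_filter, hCt,
      Finset.mem_filter]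
    constructor
    · rintro ⟨⟨h1, h2⟩, h3⟩; exact ⟨⟨Finset.mem_univ _, h2, h3⟩, h1⟩
    · rintro ⟨⟨-, h2, h3⟩, h1⟩; exact ⟨⟨h1, h2⟩, h3⟩
  have step3 : ∑ S ∈ Ck, (Ct.filter (fun T => T ⊆ S)).card
      = ∑ T ∈ Ct, (Ck.filter (fun S => T ⊆ S)).card := by
    simp only [Finset.card_filter]
    exact Finset.sum_comm
  have step4 : ∀ T ∈ Ct, (Ck.filter (fun S => T ⊆ S)).card
      ≤ (n - t).choose (k - t) := by
    intro T hT
    rw [hCt, Finset.mem_filter] at hT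
    calc (Ck.filter (fun S => T ⊆ S)).card
        ≤ ((Finset.univ : Finset (Finset V)).filter
            (fun S : Finset V => S.card = k ∧ T ⊆ S)).card := by
          refine Finset.card_le_card fun S hS => ?_
          rw [Finset.mem_filter, hCk, Finset.mem_filter] at hS
          rw [Finset.mem_filter]
          exact ⟨Finset.mem_univ _, hS.1.2.1, hS.2⟩
      _ = (n - t).choose (k - t) := by
          rw [card_supersets T hT.2.1 htk', hn]
  calc (k - t + 1) * Ck.card
      ≤ ∑ S ∈ Ck, ((S.powersetCard t).filter
          (fun (T : Finset V) => (G.induce (↑T : Set V)).Connected)).card := step1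
    _ = ∑ T ∈ Ct, (Ck.filter (fun S => T ⊆ S)).card := by
        simp only [step2]; exact step3
    _ ≤ ∑ _T ∈ Ct, (n - t).choose (k - t) := Finset.sum_le_sum step4
    _ = (n - t).choose (k - t) * Ct.card := by
        rw [Finset.sum_const, smul_eq_mul, mul_comm]
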